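/- Let S be a ring, R a maximal subring of S, and I a nonzero two-sided ideal of S with R ∩ I = {0}. Then S is a central extension of R if and only if C_I(R) = {x ∈ I : xr = rx for all r ∈ R} is nonzero. Moreover, C_I(R) ⊆ Z(S), the center of S. -/

import Mathlib

/-- `R` is a maximal subring of `S`. -/
def IsMaximalSubring {S : Type*} [Ring S] (R : Subring S) : Prop :=
  R ≠ ⊤ ∧ ∀ T : Subring S, R ≤ T → T = R ∨ T = ⊤

/-- `S` is a central extension of its subring `R`: `S` is generated as a left
`R`-module by the centralizer `C_S(R)`, i.e. every element of `S` is a finite sum of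
products `r·c` with `r ∈ R` and `c` centralizing `R`. -/
def IsCentralExtension {S : Type*} [Ring S] (R : Subring S) : Prop :=
  AddSubgroup.closure
    {s : S | ∃ r ∈ R, ∃ c : S, (∀ x ∈ R, c * x = x * c) ∧ s = r * c} = ⊤

/-- Let `R` be a maximal subring of `S` and `I` a nonzero two-sided
ideal of `S` with `R ∩ I = {0}`.  Then `S` is a central extension of `R` iff
`C_I(R) = {x ∈ I : xr = rx, ∀ r ∈ R} ≠ {0}`; moreover `C_I(R) ⊆ Z(S)`. -/
theorem stmt14 {S : Type*} [Ring S] (R : Subring S) (hmax : IsMaximalSubring R)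
    (I : TwoSidedIdeal S) (hI : I ≠ ⊥)
    (hRI : ∀ x : S, x ∈ R → x ∈ I → x = 0) :
    (IsCentralExtension R ↔ ∃ x ∈ I, x ≠ 0 ∧ ∀ r ∈ R, x * r = r * x) ∧
    (∀ x ∈ I, (∀ r ∈ R, x * r = r * x) → ∀ s : S, x * s = s * x) := by
  obtain ⟨hRtop, hmax2⟩ := hmax
  -- a nonzero element of I
  have hex : ∃ z : S, z ∈ I ∧ z ≠ 0 := by
    by_contra h
    push_neg at h
    apply hI
    ext z
    simp only [TwoSidedIdeal.mem_bot]
    exact ⟨fun hz => h z hz, fun hz => hz ▸ I.zero_mem⟩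
  -- T = R + I is a subring of S
  set T : Subring S :=
    { carrier := {s | ∃ r ∈ R, ∃ y ∈ I, s = r + y}
      one_mem' := ⟨1, R.one_mem, 0, I.zero_mem, (add_zero 1).symm⟩
      zero_mem' := ⟨0, R.zero_mem, 0, I.zero_mem, (add_zero 0).symm⟩
      add_mem' := by
        rintro a b ⟨r, hr, y, hy, rfl⟩ ⟨r', hr', y', hy', rfl⟩
        exact ⟨r + r', R.add_mem hr hr', y + y', I.add_mem hy hy', by abel⟩
      neg_mem' := by
        rintro a ⟨r, hr, y, hy, rfl⟩
        exact ⟨-r, R.neg_mem hr, -y, I.neg_mem hy, by abel⟩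
      mul_mem' := by
        rintro a b ⟨r, hr, y, hy, rfl⟩ ⟨r', hr', y', hy', rfl⟩
        refine ⟨r * r', R.mul_mem hr hr', r * y' + y * r' + y * y', ?_, by noncomm_ring⟩
        exact I.add_mem (I.add_mem (I.mul_mem_left _ _ hy') (I.mul_mem_right _ _ hy))
          (I.mul_mem_left _ _ hy') } with hTdef
  have hRT : R ≤ T := fun r hr => ⟨r, hr, 0, I.zero_mem, (add_zero r).symm⟩
  have hT : T = ⊤ := by
    rcases hmax2 T hRT with h | h
    · exfalso
      obtain ⟨z, hz, hz0⟩ := hex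
      have : z ∈ T := ⟨0, R.zero_mem, z, hz, (zero_add z).symm⟩
      rw [h] at this
      exact hz0 (hRI z this hz)
    · exact h
  -- decomposition S = R + I
  have hdec : ∀ s : S, ∃ r ∈ R, ∃ y ∈ I, s = r + y := fun s => by
    have : s ∈ T := hT ▸ Subring.mem_top s
    exact this
  -- Part 2: C_I(R) ⊆ Z(S)
  have part2 : ∀ x ∈ I, (∀ r ∈ R, x * r = r * x) → ∀ s : S, x * s = s * x := by
    intro x hxI hxR s
    set C : Subring S := Subring.centralizer {x} with hCdef
    have hRC : R ≤ C := by
      intro r hr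
      rw [Subring.mem_centralizer_iff]
      rintro g (rfl : g = x)
      exact hxR r hr
    rcases hmax2 C hRC with h | h
    · have hxC : x ∈ C := by
        rw [Subring.mem_centralizer_iff]
        rintro g (rfl : g = x); rfl
      rw [h] at hxC
      have : x = 0 := hRI x hxC hxI
      simp [this]
    · have hs : s ∈ C := h ▸ Subring.mem_top s
      rw [Subring.mem_centralizer_iff] at hs
      exact hs x rfl
  refine ⟨⟨?_, ?_⟩, part2⟩
  · -- forward: central extension → C_I(R) ≠ 0
    intro hce
    by_contra h
    push_neg at h
    -- every c centralizing R lies in R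
    have hcent : ∀ c : S, (∀ r ∈ R, c * r = r * c) → c ∈ R := by
      intro c hc
      obtain ⟨a, ha, y, hy, rfl⟩ := hdec c
      have hyR : ∀ r ∈ R, y * r = r * y := by
        intro r hr
        have h1 : (a + y) * r = r * (a + y) := hc r hr
        have h2 : y * r - r * y = r * a - a * r := by
          rw [sub_eq_sub_iff_add_eq_add, add_comm (y * r) (a * r)]
          rw [add_mul, mul_add] at h1
          exact h1
        have h3 : y * r - r * y ∈ I :=
          I.sub_mem (I.mul_mem_right _ _ hy) (I.mul_mem_left _ _ hy)
        have h4 : r * a - a * r ∈ R := R.sub_mem (R.mul_mem hr ha) (R.mul_mem ha hr)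
        have h5 : y * r - r * y = 0 := hRI _ (h2 ▸ h4) h3
        exact sub_eq_zero.mp h5
      rcases eq_or_ne y 0 with rfl | hy0
      · simpa using ha
      · obtain ⟨r, hr, hne⟩ := h y hy hy0
        exact absurd (hyR r hr) hne
    have hsub : AddSubgroup.closure
        {s : S | ∃ r ∈ R, ∃ c : S, (∀ x ∈ R, c * x = x * c) ∧ s = r * c}
        ≤ R.toAddSubgroup := by
      apply AddSubgroup.closure_le _ |>.2
      rintro s ⟨r, hr, c, hc, rfl⟩
      exact R.mul_mem hr (hcent c hc)
    rw [hce] at hsub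
    apply hRtop
    ext s
    simp only [Subring.mem_top, iff_true]
    exact hsub (AddSubgroup.mem_top s)
  · -- backward: C_I(R) ≠ 0 → central extension
    rintro ⟨x, hxI, hx0, hxR⟩
    set gen : Set S := {s : S | ∃ r ∈ R, ∃ c : S, (∀ x ∈ R, c * x = x * c) ∧ s = r * c}
      with hgen
    have hmulgen : ∀ a ∈ gen, ∀ b ∈ gen, a * b ∈ gen := by
      rintro a ⟨r, hr, c, hc, rfl⟩ b ⟨r', hr', c', hc', rfl⟩
      refine ⟨r * r', R.mul_mem hr hr', c * c', fun z hz => by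
        rw [mul_assoc, hc' z hz, ← mul_assoc, hc z hz, mul_assoc], ?_⟩
      rw [mul_assoc, ← mul_assoc c r' c', hc r' hr', mul_assoc, mul_assoc]
    set M : Subring S :=
      { carrier := (AddSubgroup.closure gen : Set S)
        one_mem' := AddSubgroup.subset_closure ⟨1, R.one_mem, 1, by simp, by simp⟩
        zero_mem' := (AddSubgroup.closure gen).zero_mem
        add_mem' := fun ha hb => (AddSubgroup.closure gen).add_mem ha hb
        neg_mem' := fun ha => (AddSubgroup.closure gen).neg_mem ha
        mul_mem' := by
          intro a b ha hb
          induction ha using AddSubgroup.closure_induction with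
          | mem u hu =>
            induction hb using AddSubgroup.closure_induction with
            | mem v hv => exact AddSubgroup.subset_closure (hmulgen u hu v hv)
            | zero => simpa using (AddSubgroup.closure gen).zero_mem
            | add v w _ _ hv hw =>
              simpa [mul_add] using (AddSubgroup.closure gen).add_mem hv hw
            | neg v _ hv => simpa [mul_neg] using (AddSubgroup.closure gen).neg_mem hv
          | zero => simpa using (AddSubgroup.closure gen).zero_mem
          | add u v _ _ hu hv =>
            simpa [add_mul] using (AddSubgroup.closure gen).add_mem hu hv
          | neg u _ hu => simpa [neg_mul] using (AddSubgroup.closure gen).neg_mem hu } with hMdef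
    have hRM : R ≤ M := fun r hr =>
      AddSubgroup.subset_closure ⟨r, hr, 1, by simp, by simp⟩
    have hM : M = ⊤ := by
      rcases hmax2 M hRM with h | h
      · exfalso
        have hxM : x ∈ M :=
          AddSubgroup.subset_closure ⟨1, R.one_mem, x, fun r hr => hxR r hr, by simp⟩
        rw [h] at hxM
        exact hx0 (hRI x hxM hxI)
      · exact h
    unfold IsCentralExtension
    ext s
    simp only [AddSubgroup.mem_top, iff_true]
    have : s ∈ M := hM ▸ Subring.mem_top s
    exact this
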